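/- Plane property of NNK graphs: let σ² > 0 and let x_i, x_j, x_k be points in a real inner product space with x_j ≠ x_i, x_j ≠ x_k, and suppose ⟨x_k − x_i, x_j − x_i⟩ > ‖x_j − x_i‖² (x_k lies strictly beyond the hyperplane through x_j with normal x_j − x_i). Then for the Gaussian kernel K_{a,b} = exp(−‖x_a − x_b‖²/(2σ²)), the minimizer (θ_ij, θ_ik) of ½θᵀ[[1, K_{j,k}],[K_{j,k}, 1]]θ − (K_{i,j}, K_{i,k})ᵀθ over θ ≥ 0 satisfies θ_ik = 0 and θ_ij = K_{i,j} > 0. -/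

import Mathlib

open RealInnerProductSpace

/-- **Plane property of NNK graphs.** If `x_k` lies strictly beyond the
hyperplane through `x_j` with normal `x_j − x_i`, i.e.
`⟪x_k − x_i, x_j − x_i⟫ > ‖x_j − x_i‖²`, then with the Gaussian kernel the
minimizer `(θij, θik)` of the three-node NNK objective
`½θᵀ[[1,K_{j,k}],[K_{j,k},1]]θ − (K_{i,j}, K_{i,k})ᵀθ` over `θ ≥ 0` satisfies
`θik = 0` and `θij = K_{i,j} > 0`. -/
theorem nnk_plane_property
    {E : Type*} [NormedAddCommGroup E] [InnerProductSpace ℝ E]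
    (σsq : ℝ) (hσ : 0 < σsq) (xi xj xk : E)
    (hji : xj ≠ xi) (hjk : xj ≠ xk)
    (hbeyond : ‖xj - xi‖ ^ 2 < ⟪xk - xi, xj - xi⟫)
    (K : E → E → ℝ) (hK : ∀ x y, K x y = Real.exp (-‖x - y‖ ^ 2 / (2 * σsq)))
    (θij θik : ℝ) (hθij : 0 ≤ θij) (hθik : 0 ≤ θik)
    (hmin : ∀ a b : ℝ, 0 ≤ a → 0 ≤ b →
      (1 / 2) * (θij ^ 2 + 2 * K xj xk * θij * θik + θik ^ 2)
          - (K xi xj * θij + K xi xk * θik) ≤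
        (1 / 2) * (a ^ 2 + 2 * K xj xk * a * b + b ^ 2)
          - (K xi xj * a + K xi xk * b)) :
    θik = 0 ∧ θij = K xi xj ∧ 0 < K xi xj := by
  have h2σ : 0 < 2 * σsq := by linarith
  -- positivity of kernel values
  have hKij : 0 < K xi xj := by rw [hK]; exact Real.exp_pos _
  have hKjk : 0 < K xj xk := by rw [hK]; exact Real.exp_pos _
  -- K jk < 1
  have hBpos : 0 < ‖xj - xk‖ ^ 2 := by
    exact pow_pos (norm_pos_iff.mpr (sub_ne_zero.mpr hjk)) 2
  have hKjk1 : K xj xk < 1 := by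
    rw [hK]
    have : -‖xj - xk‖ ^ 2 / (2 * σsq) < 0 := by
      apply div_neg_of_neg_of_pos (by linarith) h2σ
    calc Real.exp (-‖xj - xk‖ ^ 2 / (2 * σsq)) < Real.exp 0 := Real.exp_lt_exp.mpr this
      _ = 1 := Real.exp_zero
  -- geometric inequality: ‖xi - xk‖² > ‖xi - xj‖² + ‖xj - xk‖²
  have hinner : (0:ℝ) < ⟪xi - xj, xj - xk⟫ := by
    have h1 : ⟪xk - xj, xj - xi⟫ > 0 := by
      have := hbeyond
      rw [← real_inner_self_eq_norm_sq] at this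
      have h2 : ⟪xk - xi, xj - xi⟫ - ⟪xj - xi, xj - xi⟫ = ⟪xk - xj, xj - xi⟫ := by
        rw [← inner_sub_left]; congr 1; abel
      linarith
    have h3 : ⟪xi - xj, xj - xk⟫ = ⟪xk - xj, xj - xi⟫ := by
      rw [show xi - xj = -(xj - xi) from by abel, show xj - xk = -(xk - xj) from by abel,
        inner_neg_neg, real_inner_comm]
    linarith [h3 ▸ h1]
  have hC : ‖xi - xj‖ ^ 2 + ‖xj - xk‖ ^ 2 < ‖xi - xk‖ ^ 2 := by
    have hdec : xi - xk = (xi - xj) + (xj - xk) := by abel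
    rw [hdec, norm_add_sq_real]
    linarith
  -- K ik < K ij * K jk
  have hkey : K xi xk < K xi xj * K xj xk := by
    rw [hK, hK, hK, ← Real.exp_add]
    apply Real.exp_lt_exp.mpr
    rw [← add_div, div_lt_div_iff₀ h2σ h2σ]
    nlinarith
  -- step 1: θik = 0
  have ht0 : θik = 0 := by
    by_contra h
    have htpos : 0 < θik := lt_of_le_of_ne hθik (Ne.symm h)
    have h1 := hmin (θij + K xj xk * θik) 0 (by positivity) le_rfl
    nlinarith [mul_pos htpos (sub_pos.mpr hkey), sq_nonneg θik,
      mul_pos (mul_pos htpos htpos) (sub_pos.mpr hKjk1),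
      mul_pos hKjk (mul_pos htpos htpos)]
  subst ht0
  have h2 := hmin (K xi xj) 0 (le_of_lt hKij) le_rfl
  refine ⟨rfl, ?_, hKij⟩
  nlinarith [sq_nonneg (θij - K xi xj)]
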